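/- Let X be a complete separable metric space and let (P_n) be a sequence of Borel probability measures on X satisfying a large deviation principle with rate n and rate function I, i.e. I : X → [0,∞] is lower semicontinuous, for every closed set C ⊆ X one has limsup_{n→∞} (1/n) log P_n(C) ≤ −inf_{x∈C} I(x), and for every open set O ⊆ X one has liminf_{n→∞} (1/n) log P_n(O) ≥ −inf_{x∈O} I(x). Let F : X → ℝ be bounded and continuous. For Borel A ⊆ X define J_n(A) = ∫_A e^{nF(x)} P_n(dx) and the tilted probability measures P_n^F(A) = J_n(A)/J_n(X). Then (P_n^F) satisfies a large deviation principle with rate n and rate function I^F(x) = sup_{y∈X}[F(y) − I(y)] − [F(x) − I(x)]; that is, for every closed C, limsup_{n→∞} (1/n) log P_n^F(C) ≤ −inf_{x∈C} I^F(x), and for every open O, liminf_{n→∞} (1/n) log P_n^F(O) ≥ −inf_{x∈O} I^F(x). -/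

import Mathlib

open Filter MeasureTheory Topology

private lemma ereal_mul_add (r : ℝ) (hr : 0 ≤ r) (y : ℝ) (x : EReal) :
    (r : EReal) * ((y : EReal) + x) = (r : EReal) * (y : EReal) + (r : EReal) * x := by
  induction x using EReal.rec with
  | bot =>
    rcases hr.eq_or_lt with h | h
    · simp [← h, EReal.zero_mul]
    · rw [EReal.add_bot, EReal.coe_mul_bot_of_pos h, ← EReal.coe_mul, EReal.add_bot]
  | coe z => norm_cast; ring
  | top =>
    rcases hr.eq_or_lt with h | h
    · simp [← h, EReal.zero_mul]
    · rw [EReal.coe_add_top, EReal.coe_mul_top_of_pos h, ← EReal.coe_mul, EReal.coe_add_top]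

private lemma ereal_mul_max (r : ℝ) (hr : 0 ≤ r) (x y : EReal) :
    (r : EReal) * max x y = max ((r : EReal) * x) ((r : EReal) * y) := by
  have hmono : Monotone (fun t : EReal => (r : EReal) * t) := by
    intro a b hab
    exact mul_le_mul_of_nonneg_left hab (by exact_mod_cast hr)
  exact hmono.map_max

private lemma ereal_neg_iInf {ι : Sort*} (f : ι → EReal) : -(⨅ i, f i) = ⨆ i, -(f i) := by
  apply le_antisymm
  · rw [EReal.neg_le]
    refine le_iInf fun i => ?_
    rw [EReal.neg_le]
    exact le_iSup (fun i => -(f i)) i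
  · exact iSup_le fun i => EReal.neg_le_neg_iff.2 (iInf_le _ i)

private lemma tendsto_inv_mul_const (c : ℝ) :
    Tendsto (fun n : ℕ => (((n : ℝ)⁻¹ : ℝ) : EReal) * (c : EReal)) atTop (𝓝 (0 : EReal)) := by
  have : Tendsto (fun n : ℕ => ((n : ℝ)⁻¹ * c : ℝ)) atTop (𝓝 (0 : ℝ)) := by
    simpa using (tendsto_inv_atTop_nhds_zero_nat : Tendsto (fun n : ℕ => (n : ℝ)⁻¹) atTop (𝓝 0)).mul_const c
  have := (EReal.tendsto_coe (a := (0 : ℝ))).2 this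
  simpa [EReal.coe_mul] using this

-- binary log-sum lemma
private lemma limsup_log_add (u v : ℕ → ENNReal) :
    Filter.limsup (fun n : ℕ => (((n : ℝ)⁻¹ : ℝ) : EReal) * ENNReal.log (u n + v n)) atTop
      ≤ max (Filter.limsup (fun n : ℕ => (((n : ℝ)⁻¹ : ℝ) : EReal) * ENNReal.log (u n)) atTop)
          (Filter.limsup (fun n : ℕ => (((n : ℝ)⁻¹ : ℝ) : EReal) * ENNReal.log (v n)) atTop) := by
  have h2 : ENNReal.log 2 = ((Real.log 2 : ℝ) : EReal) := by
    rw [ENNReal.log_pos_real (by norm_num) (by norm_num)]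
    norm_num
  have key : ∀ n : ℕ,
      (((n : ℝ)⁻¹ : ℝ) : EReal) * ENNReal.log (u n + v n)
        ≤ (((n : ℝ)⁻¹ : ℝ) : EReal) * ((Real.log 2 : ℝ) : EReal)
          + max ((((n : ℝ)⁻¹ : ℝ) : EReal) * ENNReal.log (u n))
              ((((n : ℝ)⁻¹ : ℝ) : EReal) * ENNReal.log (v n)) := by
    intro n
    have hle : u n + v n ≤ 2 * max (u n) (v n) := by
      rw [two_mul]
      exact add_le_add (le_max_left _ _) (le_max_right _ _)
    have hlog : ENNReal.log (u n + v n)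
        ≤ ((Real.log 2 : ℝ) : EReal) + max (ENNReal.log (u n)) (ENNReal.log (v n)) := by
      calc ENNReal.log (u n + v n) ≤ ENNReal.log (2 * max (u n) (v n)) :=
            ENNReal.log_monotone hle
        _ = ENNReal.log 2 + ENNReal.log (max (u n) (v n)) := ENNReal.log_mul_add
        _ = ((Real.log 2 : ℝ) : EReal) + max (ENNReal.log (u n)) (ENNReal.log (v n)) := by
            rw [h2, ENNReal.log_monotone.map_max]
    calc (((n : ℝ)⁻¹ : ℝ) : EReal) * ENNReal.log (u n + v n)
        ≤ (((n : ℝ)⁻¹ : ℝ) : EReal)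
            * (((Real.log 2 : ℝ) : EReal) + max (ENNReal.log (u n)) (ENNReal.log (v n))) :=
          mul_le_mul_of_nonneg_left hlog (by exact_mod_cast (inv_nonneg.2 (Nat.cast_nonneg n)))
      _ = (((n : ℝ)⁻¹ : ℝ) : EReal) * ((Real.log 2 : ℝ) : EReal)
            + (((n : ℝ)⁻¹ : ℝ) : EReal) * max (ENNReal.log (u n)) (ENNReal.log (v n)) :=
          ereal_mul_add _ (by positivity) _ _
      _ = _ := by
          rw [ereal_mul_max _ (by positivity)]
  refine (Filter.limsup_le_limsup (Filter.Eventually.of_forall key)).trans ?_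
  have hlim0 : Filter.limsup
      (fun n : ℕ => (((n : ℝ)⁻¹ : ℝ) : EReal) * ((Real.log 2 : ℝ) : EReal)) atTop = 0 :=
    (tendsto_inv_mul_const (Real.log 2)).limsup_eq
  calc Filter.limsup (fun n : ℕ =>
        (((n : ℝ)⁻¹ : ℝ) : EReal) * ((Real.log 2 : ℝ) : EReal)
          + max ((((n : ℝ)⁻¹ : ℝ) : EReal) * ENNReal.log (u n))
              ((((n : ℝ)⁻¹ : ℝ) : EReal) * ENNReal.log (v n))) atTop
      ≤ Filter.limsup (fun n : ℕ =>
            (((n : ℝ)⁻¹ : ℝ) : EReal) * ((Real.log 2 : ℝ) : EReal)) atTop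
        + Filter.limsup (fun n : ℕ =>
            max ((((n : ℝ)⁻¹ : ℝ) : EReal) * ENNReal.log (u n))
              ((((n : ℝ)⁻¹ : ℝ) : EReal) * ENNReal.log (v n))) atTop := by
        refine EReal.limsup_add_le ?_ ?_
        · left; rw [hlim0]; exact (by norm_num)
        · left; rw [hlim0]; exact (by norm_num)
    _ = _ := by
        rw [hlim0, zero_add, _root_.limsup_max]

private lemma limsup_log_sum {ι : Type*} (s : Finset ι) (h : ι → ℕ → ENNReal) :
    Filter.limsup (fun n : ℕ =>
        (((n : ℝ)⁻¹ : ℝ) : EReal) * ENNReal.log (∑ i ∈ s, h i n)) atTop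
      ≤ ⨆ i ∈ s, Filter.limsup
          (fun n : ℕ => (((n : ℝ)⁻¹ : ℝ) : EReal) * ENNReal.log (h i n)) atTop := by
  classical
  induction s using Finset.induction_on with
  | empty =>
      have hev : ∀ᶠ n : ℕ in atTop,
          (((n : ℝ)⁻¹ : ℝ) : EReal) * ENNReal.log (∑ i ∈ (∅ : Finset ι), h i n) ≤ ⊥ := by
        filter_upwards [Filter.eventually_ge_atTop 1] with n hn
        have hpos : (0 : ℝ) < (n : ℝ)⁻¹ := by positivity
        simp only [Finset.sum_empty, ENNReal.log_zero]
        rw [EReal.coe_mul_bot_of_pos hpos]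
      refine le_trans (Filter.limsup_le_of_le (by isBoundedDefault) hev) ?_
      simp
  | insert a s' hnotmem ih =>
      have hsum : ∀ n : ℕ, (∑ i ∈ insert a s', h i n) = h a n + ∑ i ∈ s', h i n := by
        intro n; rw [Finset.sum_insert hnotmem]
      calc Filter.limsup (fun n : ℕ =>
            (((n : ℝ)⁻¹ : ℝ) : EReal) * ENNReal.log (∑ i ∈ insert a s', h i n)) atTop
          = Filter.limsup (fun n : ℕ =>
            (((n : ℝ)⁻¹ : ℝ) : EReal) * ENNReal.log (h a n + ∑ i ∈ s', h i n)) atTop := by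
            congr 1; funext n; rw [hsum n]
        _ ≤ max (Filter.limsup
              (fun n : ℕ => (((n : ℝ)⁻¹ : ℝ) : EReal) * ENNReal.log (h a n)) atTop)
            (Filter.limsup (fun n : ℕ =>
              (((n : ℝ)⁻¹ : ℝ) : EReal) * ENNReal.log (∑ i ∈ s', h i n)) atTop) :=
            limsup_log_add _ _
        _ ≤ _ := by
            refine max_le ?_ (ih.trans ?_)
            · exact le_iSup₂ (f := fun i (_ : i ∈ insert a s') => Filter.limsup
                (fun n : ℕ => (((n : ℝ)⁻¹ : ℝ) : EReal) * ENNReal.log (h i n)) atTop)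
                a (Finset.mem_insert_self a s')
            · refine iSup₂_le fun i hi => ?_
              exact le_iSup₂ (f := fun i (_ : i ∈ insert a s') => Filter.limsup
                (fun n : ℕ => (((n : ℝ)⁻¹ : ℝ) : EReal) * ENNReal.log (h i n)) atTop)
                i (Finset.mem_insert_of_mem hi)

private lemma ereal_le_of_forall_add (L T : EReal)
    (h : ∀ δ : ℝ, 0 < δ → L ≤ T + (δ : EReal)) : L ≤ T := by
  rw [← EReal.le_of_forall_lt_iff_le]
  intro z hz
  induction T using EReal.rec with
  | bot =>
      have := h 1 one_pos
      rw [EReal.bot_add] at this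
      exact this.trans bot_le
  | coe t =>
      have hδ : (0 : ℝ) < z - t := by
        have := EReal.coe_lt_coe_iff.1 hz
        linarith
      have := h (z - t) hδ
      rw [← EReal.coe_add] at this
      simpa using this
  | top => exact absurd hz (by simp)

private lemma ereal_coe_le_of_forall_sub (r : ℝ) (L : EReal)
    (h : ∀ δ : ℝ, 0 < δ → ((r - δ : ℝ) : EReal) ≤ L) : (r : EReal) ≤ L := by
  by_contra hcon
  push_neg at hcon
  induction L using EReal.rec with
  | bot =>
      exact EReal.coe_ne_bot _ (le_bot_iff.1 (h 1 one_pos))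
  | coe l =>
      have hl : l < r := EReal.coe_lt_coe_iff.1 hcon
      have := h ((r - l) / 2) (by linarith)
      rw [EReal.coe_le_coe_iff] at this
      linarith
  | top => exact absurd hcon (by simp)

private lemma ennreal_coe_ereal_eq {a : ENNReal} (ha : a ≠ ⊤) :
    (a : EReal) = ((a.toReal : ℝ) : EReal) := by
  rw [← EReal.toReal_coe_ennreal]
  exact (EReal.coe_toReal (by simp [ha]) (EReal.coe_ennreal_ne_bot a)).symm

private lemma ereal_biSup_add {X : Type*} (A : Set X) (h : X → EReal) (c : ℝ) :
    (⨆ x ∈ A, (h x + (c : EReal))) = (⨆ x ∈ A, h x) + (c : EReal) := by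
  apply le_antisymm
  · exact iSup₂_le fun x hx => add_le_add
      (le_iSup₂ (f := fun x (_ : x ∈ A) => h x) x hx) le_rfl
  · refine EReal.add_le_of_forall_lt fun p hp q hq => ?_
    rw [lt_iSup_iff] at hp
    obtain ⟨x, hp⟩ := hp
    rw [lt_iSup_iff] at hp
    obtain ⟨hx, hp⟩ := hp
    exact le_trans (add_le_add hp.le hq.le)
      (le_iSup₂ (f := fun x (_ : x ∈ A) => h x + (c : EReal)) x hx)

theorem tilted_LDP
    {X : Type*} [MetricSpace X] [CompleteSpace X] [TopologicalSpace.SeparableSpace X]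
    [MeasurableSpace X] [BorelSpace X]
    (P : ℕ → Measure X) (hP : ∀ n, IsProbabilityMeasure (P n))
    (I : X → ENNReal) (hI : LowerSemicontinuous I)
    (hupper : ∀ C : Set X, IsClosed C →
      Filter.limsup (fun n : ℕ => (((n : ℝ)⁻¹ : ℝ) : EReal) * ENNReal.log (P n C)) atTop
        ≤ -(⨅ x ∈ C, (I x : EReal)))
    (hlower : ∀ O : Set X, IsOpen O →
      -(⨅ x ∈ O, (I x : EReal)) ≤
        Filter.liminf (fun n : ℕ => (((n : ℝ)⁻¹ : ℝ) : EReal) * ENNReal.log (P n O)) atTop)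
    (F : X → ℝ) (hF : Continuous F) (hFb : ∃ M : ℝ, ∀ x, |F x| ≤ M)
    -- the tilted measures `P_n^F`
    (PF : ℕ → Measure X)
    (hPF : ∀ n, PF n =
      (∫⁻ x, ENNReal.ofReal (Real.exp (n * F x)) ∂(P n))⁻¹ •
        (P n).withDensity (fun x => ENNReal.ofReal (Real.exp (n * F x))))
    -- the tilted rate function `I^F`
    (IF : X → EReal)
    (hIF : ∀ x, IF x = (⨆ y, ((F y : EReal) - (I y : EReal))) - ((F x : EReal) - (I x : EReal))) :
    (∀ C : Set X, IsClosed C →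
      Filter.limsup (fun n : ℕ => (((n : ℝ)⁻¹ : ℝ) : EReal) * ENNReal.log (PF n C)) atTop
        ≤ -(⨅ x ∈ C, IF x)) ∧
    (∀ O : Set X, IsOpen O →
      -(⨅ x ∈ O, IF x) ≤
        Filter.liminf (fun n : ℕ => (((n : ℝ)⁻¹ : ℝ) : EReal) * ENNReal.log (PF n O)) atTop) := by
  obtain ⟨M, hM⟩ := hFb
  -- X is nonempty
  have hXne : Nonempty X := by
    by_contra hemp
    rw [not_nonempty_iff] at hemp
    have h1 := (hP 0).measure_univ
    rw [Set.univ_eq_empty_iff.2 hemp, measure_empty] at h1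
    exact zero_ne_one h1
  have hM0 : 0 ≤ M := le_trans (abs_nonneg _) (hM (Classical.arbitrary X))
  have hFle : ∀ x, F x ≤ M := fun x => (abs_le.1 (hM x)).2
  have hFge : ∀ x, -M ≤ F x := fun x => (abs_le.1 (hM x)).1
  -- the partition function integrals
  set J : ℕ → Set X → ENNReal :=
    fun n A => ∫⁻ x in A, ENNReal.ofReal (Real.exp (n * F x)) ∂(P n) with hJdef
  have he_meas : ∀ n : ℕ, Measurable (fun x => ENNReal.ofReal (Real.exp ((n : ℝ) * F x))) :=
    fun n => (Real.continuous_exp.comp (continuous_const.mul hF)).measurable.ennreal_ofReal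
  have hJmono : ∀ (n : ℕ) (A B : Set X), A ⊆ B → J n A ≤ J n B := by
    intro n A B hAB
    rw [hJdef]
    exact lintegral_mono_set hAB
  have hJunion : ∀ (n : ℕ) (k : ℕ) (Ci : Fin k → Set X),
      J n (⋃ i, Ci i) ≤ ∑ i : Fin k, J n (Ci i) := by
    intro n k Ci
    rw [hJdef]
    refine (lintegral_iUnion_le _ _).trans ?_
    rw [tsum_fintype]
  have hJconst_ub : ∀ (n : ℕ) (A : Set X) (c : ℝ), (∀ x ∈ A, (n : ℝ) * F x ≤ c) →
      J n A ≤ ENNReal.ofReal (Real.exp c) * P n A := by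
    intro n A c hc
    rw [hJdef]
    calc (∫⁻ x in A, ENNReal.ofReal (Real.exp (n * F x)) ∂(P n))
        ≤ ∫⁻ _ in A, ENNReal.ofReal (Real.exp c) ∂(P n) :=
          setLIntegral_mono measurable_const
            (fun x hx => ENNReal.ofReal_le_ofReal (Real.exp_le_exp.2 (hc x hx)))
      _ = ENNReal.ofReal (Real.exp c) * P n A := setLIntegral_const _ _
  have hJconst_lb : ∀ (n : ℕ) (A : Set X) (c : ℝ), (∀ x ∈ A, c ≤ (n : ℝ) * F x) →
      ENNReal.ofReal (Real.exp c) * P n A ≤ J n A := by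
    intro n A c hc
    rw [hJdef]
    calc ENNReal.ofReal (Real.exp c) * P n A
        = ∫⁻ _ in A, ENNReal.ofReal (Real.exp c) ∂(P n) := (setLIntegral_const _ _).symm
      _ ≤ ∫⁻ x in A, ENNReal.ofReal (Real.exp (n * F x)) ∂(P n) :=
          setLIntegral_mono (he_meas n)
            (fun x hx => ENNReal.ofReal_le_ofReal (Real.exp_le_exp.2 (hc x hx)))
  -- bounds on the partition function
  have hZlb : ∀ n : ℕ, ENNReal.ofReal (Real.exp (-((n : ℝ) * M))) ≤ J n Set.univ := by
    intro n
    have := hJconst_lb n Set.univ (-((n : ℝ) * M)) (fun x _ => by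
      have h1 : (n : ℝ) * (-M) ≤ (n : ℝ) * F x :=
        mul_le_mul_of_nonneg_left (hFge x) (Nat.cast_nonneg n)
      nlinarith)
    rwa [measure_univ, mul_one] at this
  have hZub : ∀ (n : ℕ) (A : Set X), J n A ≤ ENNReal.ofReal (Real.exp ((n : ℝ) * M)) := by
    intro n A
    refine (hJmono n A Set.univ (Set.subset_univ A)).trans ?_
    have := hJconst_ub n Set.univ ((n : ℝ) * M) (fun x _ =>
      mul_le_mul_of_nonneg_left (hFle x) (Nat.cast_nonneg n))
    rwa [measure_univ, mul_one] at this
  have hZ0 : ∀ n : ℕ, J n Set.univ ≠ 0 :=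
    fun n => (lt_of_lt_of_le (ENNReal.ofReal_pos.2 (Real.exp_pos _)) (hZlb n)).ne'
  have hZtop : ∀ n : ℕ, J n Set.univ ≠ ⊤ :=
    fun n => (lt_of_le_of_lt (hZub n Set.univ) ENNReal.ofReal_lt_top).ne
  have hJntop : ∀ (n : ℕ) (A : Set X), ENNReal.log (J n A) ≠ ⊤ := by
    intro n A
    simp only [ne_eq, ENNReal.log_eq_top_iff]
    exact (lt_of_le_of_lt (hZub n A) ENNReal.ofReal_lt_top).ne
  -- the sequence identity
  have hseq : ∀ (A : Set X), MeasurableSet A → ∀ n : ℕ,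
      (((n : ℝ)⁻¹ : ℝ) : EReal) * ENNReal.log (PF n A)
        = (((n : ℝ)⁻¹ : ℝ) : EReal) * ENNReal.log (J n A)
          + (-((((n : ℝ)⁻¹ : ℝ) : EReal) * ENNReal.log (J n Set.univ))) := by
    intro A hA n
    have hPFA : PF n A = (J n Set.univ)⁻¹ * J n A := by
      rw [hPF n, Measure.smul_apply, withDensity_apply _ hA, smul_eq_mul, hJdef]
      congr 1
      rw [← MeasureTheory.setLIntegral_univ]
    have hz : ENNReal.log (J n Set.univ) = (((ENNReal.log (J n Set.univ)).toReal : ℝ) : EReal) :=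
      (EReal.coe_toReal (hJntop n Set.univ) (by
        rw [ne_eq, ENNReal.log_eq_bot_iff]; exact hZ0 n)).symm
    set z : ℝ := (ENNReal.log (J n Set.univ)).toReal with hzdef
    rw [hPFA, ENNReal.log_mul_add, ENNReal.log_inv, hz, ← EReal.coe_neg,
      ereal_mul_add _ (inv_nonneg.2 (Nat.cast_nonneg n)) _ _, add_comm]
    congr 1
    rw [← EReal.coe_mul, ← EReal.coe_mul, ← EReal.coe_neg, EReal.coe_eq_coe_iff]
    ring
  -- Varadhan upper bound for closed sets
  have hU : ∀ C : Set X, IsClosed C →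
      Filter.limsup (fun n : ℕ => (((n : ℝ)⁻¹ : ℝ) : EReal) * ENNReal.log (J n C)) atTop
        ≤ ⨆ x ∈ C, ((F x : EReal) - (I x : EReal)) := by
    intro C hC
    refine ereal_le_of_forall_add _ _ fun δ hδ => ?_
    set k : ℕ := ⌊2 * M / δ⌋₊ + 1 with hk
    set Ci : Fin k → Set X :=
      fun i => C ∩ F ⁻¹' Set.Icc (-M + (i : ℕ) * δ) (-M + (i : ℕ) * δ + δ) with hCidef
    have hCiclosed : ∀ i, IsClosed (Ci i) :=
      fun i => hC.inter (IsClosed.preimage hF isClosed_Icc)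
    have hcover : C ⊆ ⋃ i, Ci i := by
      intro x hx
      have hFxM : 0 ≤ F x + M := by linarith [hFge x]
      set j : ℕ := ⌊(F x + M) / δ⌋₊ with hjdef
      have hjle : (j : ℝ) ≤ (F x + M) / δ := Nat.floor_le (by positivity)
      have hjlt : (F x + M) / δ < (j : ℝ) + 1 := Nat.lt_floor_add_one _
      have hjk : j < k := by
        have h1 : (F x + M) / δ ≤ 2 * M / δ :=
          (div_le_div_iff_of_pos_right hδ).2 (by linarith [hFle x])
        have h3 : (2 * M / δ : ℝ) < (k : ℝ) := by
          rw [hk]; push_cast; exact Nat.lt_floor_add_one _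
        have : (j : ℝ) < (k : ℝ) := lt_of_le_of_lt (hjle.trans h1) h3
        exact_mod_cast this
      have hj1 : (j : ℝ) * δ ≤ F x + M := by
        have := (le_div_iff₀ hδ).1 hjle
        linarith
      have hj2 : F x + M < ((j : ℝ) + 1) * δ := by
        have := (div_lt_iff₀ hδ).1 hjlt
        linarith
      refine Set.mem_iUnion.2 ⟨⟨j, hjk⟩, hx, ?_⟩
      simp only [Set.mem_preimage, Set.mem_Icc, Fin.val_mk]
      constructor
      · linarith
      · nlinarith
    have hptle : ∀ n : ℕ, (((n : ℝ)⁻¹ : ℝ) : EReal) * ENNReal.log (J n C)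
        ≤ (((n : ℝ)⁻¹ : ℝ) : EReal) * ENNReal.log
            (∑ i : Fin k, ENNReal.ofReal (Real.exp ((n : ℝ) * (-M + (i : ℕ) * δ + δ)))
              * P n (Ci i)) := by
      intro n
      refine mul_le_mul_of_nonneg_left (ENNReal.log_monotone ?_)
        (by exact_mod_cast inv_nonneg.2 (Nat.cast_nonneg n))
      calc J n C ≤ J n (⋃ i, Ci i) := hJmono n _ _ hcover
        _ ≤ ∑ i : Fin k, J n (Ci i) := hJunion n k Ci
        _ ≤ ∑ i : Fin k, ENNReal.ofReal (Real.exp ((n : ℝ) * (-M + (i : ℕ) * δ + δ)))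
              * P n (Ci i) :=
            Finset.sum_le_sum fun i _ => hJconst_ub n (Ci i) _ fun y hy =>
              mul_le_mul_of_nonneg_left hy.2.2 (Nat.cast_nonneg n)
    refine le_trans (Filter.limsup_le_limsup (Filter.Eventually.of_forall hptle)) ?_
    refine le_trans (limsup_log_sum Finset.univ fun (i : Fin k) (n : ℕ) =>
        ENNReal.ofReal (Real.exp ((n : ℝ) * (-M + (i : ℕ) * δ + δ))) * P n (Ci i)) ?_
    refine iSup₂_le fun i _ => ?_
    set c : ℝ := -M + (i : ℕ) * δ + δ with hcdef
    have hev : ∀ᶠ n : ℕ in atTop,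
        (((n : ℝ)⁻¹ : ℝ) : EReal)
            * ENNReal.log (ENNReal.ofReal (Real.exp ((n : ℝ) * c)) * P n (Ci i))
          ≤ ((c : ℝ) : EReal) + (((n : ℝ)⁻¹ : ℝ) : EReal) * ENNReal.log (P n (Ci i)) := by
      filter_upwards [Filter.eventually_ge_atTop 1] with n hn
      have hn0 : (0 : ℝ) < (n : ℝ) := by exact_mod_cast hn
      rw [ENNReal.log_mul_add, ENNReal.log_ofReal_of_pos (Real.exp_pos _), Real.log_exp,
        ereal_mul_add _ (inv_nonneg.2 (Nat.cast_nonneg n)) _ _]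
      apply le_of_eq
      congr 1
      rw [← EReal.coe_mul, EReal.coe_eq_coe_iff]
      field_simp
    refine le_trans (Filter.limsup_le_limsup hev) ?_
    have hsplit : (fun n : ℕ =>
          ((c : ℝ) : EReal) + (((n : ℝ)⁻¹ : ℝ) : EReal) * ENNReal.log (P n (Ci i)))
        = (fun _ : ℕ => ((c : ℝ) : EReal))
          + (fun n : ℕ => (((n : ℝ)⁻¹ : ℝ) : EReal) * ENNReal.log (P n (Ci i))) := rfl
    rw [hsplit]
    refine le_trans (EReal.limsup_add_le ?_ ?_) ?_
    · left; rw [Filter.limsup_const]; exact EReal.coe_ne_bot _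
    · left; rw [Filter.limsup_const]; exact EReal.coe_ne_top _
    rw [Filter.limsup_const]
    refine le_trans (add_le_add le_rfl (hupper (Ci i) (hCiclosed i))) ?_
    rw [show -(⨅ x ∈ Ci i, (I x : EReal)) = ⨆ x ∈ Ci i, -(I x : EReal) by
      rw [ereal_neg_iInf]; exact iSup_congr fun x => ereal_neg_iInf _]
    refine EReal.add_le_of_forall_lt fun p hp q hq => ?_
    rw [lt_iSup_iff] at hq
    obtain ⟨x, hq⟩ := hq
    rw [lt_iSup_iff] at hq
    obtain ⟨hxCi, hq⟩ := hq
    have hcFx : (c : EReal) ≤ ((F x + δ : ℝ) : EReal) := by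
      have h1 : -M + (i : ℕ) * δ ≤ F x := hxCi.2.1
      have : c ≤ F x + δ := by rw [hcdef]; linarith
      exact_mod_cast this
    calc p + q ≤ (c : EReal) + (-(I x : EReal)) := add_le_add hp.le hq.le
      _ ≤ ((F x + δ : ℝ) : EReal) + (-(I x : EReal)) := add_le_add hcFx le_rfl
      _ = ((F x : EReal) - (I x : EReal)) + ((δ : ℝ) : EReal) := by
          rw [EReal.coe_add, sub_eq_add_neg, add_right_comm]
      _ ≤ (⨆ x ∈ C, ((F x : EReal) - (I x : EReal))) + ((δ : ℝ) : EReal) :=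
          add_le_add (le_iSup₂ (f := fun x (_ : x ∈ C) => (F x : EReal) - (I x : EReal))
            x hxCi.1) le_rfl
  -- Varadhan lower bound for open sets
  have hL : ∀ O : Set X, IsOpen O →
      (⨆ x ∈ O, ((F x : EReal) - (I x : EReal))) ≤
        Filter.liminf (fun n : ℕ => (((n : ℝ)⁻¹ : ℝ) : EReal) * ENNReal.log (J n O)) atTop := by
    intro O hO
    refine iSup₂_le fun x hx => ?_
    by_cases hIx : I x = ⊤
    · rw [hIx, EReal.coe_ennreal_top, sub_eq_add_neg, EReal.neg_top, EReal.add_bot]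
      exact bot_le
    · rw [ennreal_coe_ereal_eq hIx,
        show ((F x : EReal) - (((I x).toReal : ℝ) : EReal))
          = ((F x - (I x).toReal : ℝ) : EReal) by norm_cast]
      refine ereal_coe_le_of_forall_sub _ _ fun δ hδ => ?_
      set U : Set X := O ∩ F ⁻¹' Set.Ioi (F x - δ) with hUdef
      have hUopen : IsOpen U := hO.inter (IsOpen.preimage hF isOpen_Ioi)
      have hxU : x ∈ U := ⟨hx, by simp only [Set.mem_preimage, Set.mem_Ioi]; linarith⟩
      have hIUx : (⨅ y ∈ U, (I y : EReal)) ≤ (I x : EReal) :=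
        iInf₂_le (f := fun y (_ : y ∈ U) => (I y : EReal)) x hxU
      have hev : ∀ᶠ n : ℕ in atTop,
          ((F x - δ : ℝ) : EReal) + (((n : ℝ)⁻¹ : ℝ) : EReal) * ENNReal.log (P n U)
            ≤ (((n : ℝ)⁻¹ : ℝ) : EReal) * ENNReal.log (J n O) := by
        filter_upwards [Filter.eventually_ge_atTop 1] with n hn
        have hn0 : (0 : ℝ) < (n : ℝ) := by exact_mod_cast hn
        have h1 : ENNReal.ofReal (Real.exp ((n : ℝ) * (F x - δ))) * P n U ≤ J n O := by
          refine le_trans (hJconst_lb n U ((n : ℝ) * (F x - δ)) fun y hy => ?_)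
            (hJmono n U O Set.inter_subset_left)
          exact mul_le_mul_of_nonneg_left (le_of_lt hy.2) (Nat.cast_nonneg n)
        have h2 : (((n : ℝ) * (F x - δ) : ℝ) : EReal) + ENNReal.log (P n U)
            ≤ ENNReal.log (J n O) := by
          refine le_trans (le_of_eq ?_) (ENNReal.log_monotone h1)
          rw [ENNReal.log_mul_add, ENNReal.log_ofReal_of_pos (Real.exp_pos _), Real.log_exp]
        calc ((F x - δ : ℝ) : EReal) + (((n : ℝ)⁻¹ : ℝ) : EReal) * ENNReal.log (P n U)
            = (((n : ℝ)⁻¹ : ℝ) : EReal)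
                * ((((n : ℝ) * (F x - δ) : ℝ) : EReal) + ENNReal.log (P n U)) := by
              rw [ereal_mul_add _ (inv_nonneg.2 (Nat.cast_nonneg n)) _ _, ← EReal.coe_mul]
              congr 2
              field_simp
          _ ≤ (((n : ℝ)⁻¹ : ℝ) : EReal) * ENNReal.log (J n O) :=
              mul_le_mul_of_nonneg_left h2
                (by exact_mod_cast inv_nonneg.2 (Nat.cast_nonneg n))
      calc ((F x - (I x).toReal - δ : ℝ) : EReal)
          = ((F x - δ : ℝ) : EReal) + ((-(I x).toReal : ℝ) : EReal) := by
            rw [← EReal.coe_add, EReal.coe_eq_coe_iff]; ring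
        _ = ((F x - δ : ℝ) : EReal) + (-(I x : EReal)) := by
            rw [ennreal_coe_ereal_eq hIx, ← EReal.coe_neg]
        _ ≤ ((F x - δ : ℝ) : EReal) + (-(⨅ y ∈ U, (I y : EReal))) :=
            add_le_add le_rfl (EReal.neg_le_neg_iff.2 hIUx)
        _ ≤ ((F x - δ : ℝ) : EReal)
              + Filter.liminf (fun n : ℕ =>
                  (((n : ℝ)⁻¹ : ℝ) : EReal) * ENNReal.log (P n U)) atTop :=
            add_le_add le_rfl (hlower U hUopen)
        _ ≤ Filter.liminf ((fun _ : ℕ => ((F x - δ : ℝ) : EReal))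
              + fun n : ℕ => (((n : ℝ)⁻¹ : ℝ) : EReal) * ENNReal.log (P n U)) atTop := by
            refine le_trans (le_of_eq ?_) EReal.le_liminf_add
            rw [Filter.liminf_const]
        _ ≤ Filter.liminf (fun n : ℕ =>
              (((n : ℝ)⁻¹ : ℝ) : EReal) * ENNReal.log (J n O)) atTop :=
            Filter.liminf_le_liminf hev
  -- basic facts about the supremum S
  set bseq : ℕ → EReal :=
    fun n : ℕ => (((n : ℝ)⁻¹ : ℝ) : EReal) * ENNReal.log (J n Set.univ) with hbseq
  have hbS : Filter.limsup bseq atTop ≤ ⨆ y, ((F y : EReal) - (I y : EReal)) := by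
    refine (hU Set.univ isClosed_univ).trans ?_
    rw [iSup_univ]
  have hSb : (⨆ y, ((F y : EReal) - (I y : EReal))) ≤ Filter.liminf bseq atTop := by
    refine le_trans ?_ (hL Set.univ isOpen_univ)
    rw [iSup_univ]
  have hlbM : ((-M : ℝ) : EReal) ≤ Filter.liminf bseq atTop := by
    refine Filter.le_liminf_of_le (by isBoundedDefault) ?_
    filter_upwards [Filter.eventually_ge_atTop 1] with n hn
    have hn0 : (0 : ℝ) < (n : ℝ) := by exact_mod_cast hn
    have h1 : ((-((n : ℝ) * M) : ℝ) : EReal) ≤ ENNReal.log (J n Set.univ) := by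
      refine le_trans (le_of_eq ?_) (ENNReal.log_monotone (hZlb n))
      rw [ENNReal.log_ofReal_of_pos (Real.exp_pos _), Real.log_exp]
    calc ((-M : ℝ) : EReal) = (((n : ℝ)⁻¹ : ℝ) : EReal) * ((-((n : ℝ) * M) : ℝ) : EReal) := by
          rw [← EReal.coe_mul]
          norm_cast
          field_simp
      _ ≤ bseq n := mul_le_mul_of_nonneg_left h1
          (by exact_mod_cast (inv_nonneg.2 (Nat.cast_nonneg n)))
  have hliminf_le := Filter.liminf_le_limsup (f := atTop) (u := bseq)
  have hSnebot : (⨆ y, ((F y : EReal) - (I y : EReal))) ≠ ⊥ :=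
    fun h => absurd ((hlbM.trans hliminf_le).trans (hbS.trans_eq h))
      (by simp [EReal.bot_lt_coe])
  have hSnetop : (⨆ y, ((F y : EReal) - (I y : EReal))) ≠ ⊤ := by
    refine ne_top_of_le_ne_top (EReal.coe_ne_top M) (iSup_le fun y => ?_)
    calc (F y : EReal) - (I y : EReal) ≤ (F y : EReal) - (0 : EReal) :=
          EReal.sub_le_sub le_rfl (EReal.coe_ennreal_nonneg _)
      _ = (F y : EReal) := by rw [sub_zero]
      _ ≤ (M : EReal) := by exact_mod_cast hFle y
  obtain ⟨s, hs⟩ : ∃ s : ℝ, (⨆ y, ((F y : EReal) - (I y : EReal))) = (s : EReal) :=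
    ⟨_, (EReal.coe_toReal hSnetop hSnebot).symm⟩
  have hlimsupb : Filter.limsup bseq atTop = (s : EReal) :=
    le_antisymm (hbS.trans_eq hs) (hs ▸ hSb.trans hliminf_le)
  have hliminfb : Filter.liminf bseq atTop = (s : EReal) :=
    le_antisymm (hliminf_le.trans (hbS.trans_eq hs)) (hs ▸ hSb)
  have hnegb_limsup : Filter.limsup (fun n => -(bseq n)) atTop = ((-s : ℝ) : EReal) := by
    rw [show (fun n => -(bseq n)) = -bseq from rfl, EReal.limsup_neg, hliminfb, ← EReal.coe_neg]
  have hnegb_liminf : Filter.liminf (fun n => -(bseq n)) atTop = ((-s : ℝ) : EReal) := by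
    rw [show (fun n => -(bseq n)) = -bseq from rfl, EReal.liminf_neg, hlimsupb, ← EReal.coe_neg]
  -- the key identity for the rate function
  have hneg_IF : ∀ x : X, -(IF x) = ((F x : EReal) - (I x : EReal)) + ((-s : ℝ) : EReal) := by
    intro x
    rw [hIF x, hs]
    by_cases hIx : I x = ⊤
    · rw [hIx, EReal.coe_ennreal_top]
      rw [sub_eq_add_neg (F x : EReal), EReal.neg_top, EReal.add_bot,
        sub_eq_add_neg, EReal.neg_bot, EReal.add_top_of_ne_bot (EReal.coe_ne_bot s),
        EReal.neg_top, EReal.bot_add]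
    · rw [ennreal_coe_ereal_eq hIx]
      norm_cast
      ring
  have hkey : ∀ A : Set X, -(⨅ x ∈ A, IF x)
      = (⨆ x ∈ A, ((F x : EReal) - (I x : EReal))) + ((-s : ℝ) : EReal) := by
    intro A
    calc -(⨅ x ∈ A, IF x) = ⨆ x ∈ A, -(IF x) := by
          rw [ereal_neg_iInf]
          exact iSup_congr fun x => ereal_neg_iInf _
      _ = ⨆ x ∈ A, (((F x : EReal) - (I x : EReal)) + ((-s : ℝ) : EReal)) := by
          refine iSup_congr fun x => iSup_congr fun _ => hneg_IF x
      _ = _ := ereal_biSup_add A _ _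
  constructor
  · -- upper bound
    intro C hC
    have heq : (fun n : ℕ => (((n : ℝ)⁻¹ : ℝ) : EReal) * ENNReal.log (PF n C))
        = (fun n : ℕ => (((n : ℝ)⁻¹ : ℝ) : EReal) * ENNReal.log (J n C))
          + (fun n : ℕ => -(bseq n)) :=
      funext fun n => hseq C hC.measurableSet n
    rw [heq, hkey C]
    calc Filter.limsup ((fun n : ℕ => (((n : ℝ)⁻¹ : ℝ) : EReal) * ENNReal.log (J n C))
          + (fun n : ℕ => -(bseq n))) atTop
        ≤ Filter.limsup (fun n : ℕ => (((n : ℝ)⁻¹ : ℝ) : EReal) * ENNReal.log (J n C)) atTop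
          + Filter.limsup (fun n : ℕ => -(bseq n)) atTop := by
          refine EReal.limsup_add_le ?_ ?_
          · right; rw [hnegb_limsup]; exact EReal.coe_ne_top _
          · right; rw [hnegb_limsup]; exact EReal.coe_ne_bot _
      _ ≤ (⨆ x ∈ C, ((F x : EReal) - (I x : EReal))) + ((-s : ℝ) : EReal) := by
          rw [hnegb_limsup]
          exact add_le_add (hU C hC) le_rfl
  · -- lower bound
    intro O hO
    have heq : (fun n : ℕ => (((n : ℝ)⁻¹ : ℝ) : EReal) * ENNReal.log (PF n O))
        = (fun n : ℕ => (((n : ℝ)⁻¹ : ℝ) : EReal) * ENNReal.log (J n O))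
          + (fun n : ℕ => -(bseq n)) :=
      funext fun n => hseq O hO.measurableSet n
    rw [heq, hkey O]
    calc (⨆ x ∈ O, ((F x : EReal) - (I x : EReal))) + ((-s : ℝ) : EReal)
        ≤ Filter.liminf (fun n : ℕ => (((n : ℝ)⁻¹ : ℝ) : EReal) * ENNReal.log (J n O)) atTop
          + Filter.liminf (fun n : ℕ => -(bseq n)) atTop := by
          rw [hnegb_liminf]
          exact add_le_add (hL O hO) le_rfl
      _ ≤ _ := EReal.le_liminf_add
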